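/- In the mean-field setting, assume λ > 0. Then the vector X^MF satisfies the linear system (α^MF·I − EA_τ + λ·P_L)·X^MF = λ·S, for every real τ. -/

import Mathlib

open Finset Matrix

noncomputable section

/-- The expected adjacency matrix `EA` of the SSBM: `(EA)_{ij} = p_in` if
`σ⁰_i = σ⁰_j`, and `p_out` otherwise. -/
def meanEA (n : ℕ) (pin pout : ℝ) (σ0 : Fin n → ℝ) : Matrix (Fin n) (Fin n) ℝ :=
  Matrix.of fun i j => if σ0 i = σ0 j then pin else pout

/-- The diagonal 0-1 matrix `P_L` with `(P_L)_{ii} = 1` iff `S_i ≠ 0`. -/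
def labelProj (n : ℕ) (S : Fin n → ℝ) : Matrix (Fin n) (Fin n) ℝ :=
  Matrix.diagonal fun i => if S i = 0 then 0 else 1

/-- The mean-field matrix `EL̃ = α^MF·I − EA_τ + λ·P_L`, with
`EA_τ = EA − τ·1ₙ1ₙᵀ` and `α^MF = n(p_in − p_out)/2`. -/
def meanLtilde (n : ℕ) (pin pout τ lam : ℝ) (σ0 S : Fin n → ℝ) :
    Matrix (Fin n) (Fin n) ℝ :=
  ((n : ℝ) * (pin - pout) / 2) • (1 : Matrix (Fin n) (Fin n) ℝ)
    - Matrix.of (fun i j => meanEA n pin pout σ0 i j - τ)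
    + lam • labelProj n S

/-- The mean-field score vector `X^MF`: with `s = k/(k+m)`,
`γ₁ = (−λ + (1−2s)α^MF)/(λ + α^MF)`, `γ₂ = (λ + (1−2s)α^MF)/(λ + α^MF)`,
`X^MF_i = γ₁σ⁰_i` on mislabeled nodes, `γ₂σ⁰_i` on correctly labeled nodes, and
`(1−2s)σ⁰_i` on unlabeled nodes. -/
def meanFieldX (n k m : ℕ) (pin pout lam : ℝ) (σ0 S : Fin n → ℝ) : Fin n → ℝ :=
  fun i =>
    if S i = 0 then (1 - 2 * ((k : ℝ) / ((k : ℝ) + (m : ℝ)))) * σ0 i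
    else if S i = σ0 i then
      ((lam + (1 - 2 * ((k : ℝ) / ((k : ℝ) + (m : ℝ)))) * ((n : ℝ) * (pin - pout) / 2))
          / (lam + (n : ℝ) * (pin - pout) / 2)) * σ0 i
    else
      ((-lam + (1 - 2 * ((k : ℝ) / ((k : ℝ) + (m : ℝ)))) * ((n : ℝ) * (pin - pout) / 2))
          / (lam + (n : ℝ) * (pin - pout) / 2)) * σ0 i

set_option maxHeartbeats 2000000 in
/-- **Proposition 2 (mean-field solution).** In the mean-field setting, for `λ > 0`
and every real `τ`, the vector `X^MF` solves the linear system
`(α^MF·I − EA_τ + λ·P_L)·X^MF = λ·S`. -/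
theorem meanField_linear_system
    (n : ℕ) (hn : 0 < n) (hev : Even n) (pin pout : ℝ)
    (hpout : 0 < pout) (hp : pout < pin) (hpin : pin < 1)
    (k m : ℕ) (hkm1 : 1 ≤ k + m) (hkm2 : k + m ≤ n / 2 - 1)
    (σ0 S : Fin n → ℝ)
    (hσ : ∀ i, σ0 i = 1 ∨ σ0 i = -1)
    (hbal : (Finset.univ.filter (fun i => σ0 i = 1)).card = n / 2)
    (hSval : ∀ i, S i = σ0 i ∨ S i = -σ0 i ∨ S i = 0)
    (hk1 : (Finset.univ.filter (fun i => σ0 i = 1 ∧ S i = -1)).card = k)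
    (hk2 : (Finset.univ.filter (fun i => σ0 i = -1 ∧ S i = 1)).card = k)
    (hm1 : (Finset.univ.filter (fun i => σ0 i = 1 ∧ S i = 1)).card = m)
    (hm2 : (Finset.univ.filter (fun i => σ0 i = -1 ∧ S i = -1)).card = m)
    (lam : ℝ) (hlam : 0 < lam) (τ : ℝ) :
    meanLtilde n pin pout τ lam σ0 S *ᵥ meanFieldX n k m pin pout lam σ0 S
      = lam • S := by
  -- abbreviations
  set g0 : ℝ := 1 - 2 * ((k : ℝ) / ((k : ℝ) + (m : ℝ))) with hg0
  set g2 : ℝ := (lam + g0 * ((n : ℝ) * (pin - pout) / 2)) / (lam + (n : ℝ) * (pin - pout) / 2) with hg2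
  set g1 : ℝ := (-lam + g0 * ((n : ℝ) * (pin - pout) / 2)) / (lam + (n : ℝ) * (pin - pout) / 2) with hg1
  have sum6 : ∀ F : ℝ → ℝ → ℝ, (∑ j, F (σ0 j) (S j))
      = (m:ℝ) * F 1 1 + (k:ℝ) * F 1 (-1)
        + ((Finset.univ.filter (fun j => σ0 j = 1 ∧ S j = 0)).card : ℝ) * F 1 0
        + ((m:ℝ) * F (-1) (-1) + (k:ℝ) * F (-1) 1
        + ((Finset.univ.filter (fun j => σ0 j = -1 ∧ S j = 0)).card : ℝ) * F (-1) 0) := by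
    intro F
    have key : ∀ j : Fin n, F (σ0 j) (S j) =
        (if σ0 j = 1 ∧ S j = 1 then (1:ℝ) else 0) * F 1 1
        + (if σ0 j = 1 ∧ S j = -1 then (1:ℝ) else 0) * F 1 (-1)
        + (if σ0 j = 1 ∧ S j = 0 then (1:ℝ) else 0) * F 1 0
        + ((if σ0 j = -1 ∧ S j = -1 then (1:ℝ) else 0) * F (-1) (-1)
        + (if σ0 j = -1 ∧ S j = 1 then (1:ℝ) else 0) * F (-1) 1
        + (if σ0 j = -1 ∧ S j = 0 then (1:ℝ) else 0) * F (-1) 0) := by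
      intro j
      rcases hσ j with h | h <;> rcases hSval j with h' | h' | h' <;>
        (try rw [h] at h') <;> norm_num [h, h']
    rw [Finset.sum_congr rfl (fun j _ => key j)]
    simp only [Finset.sum_add_distrib, ← Finset.sum_mul, Finset.sum_boole,
      Finset.filter_congr_decidable]
    rw [hm1, hk1, hm2, hk2]
  have h2 : n / 2 * 2 = n := Nat.div_mul_cancel hev.two_dvd
  have hnn : ((n/2 : ℕ) : ℝ) * 2 = (n:ℝ) := by exact_mod_cast h2
  have u1r : (((Finset.univ.filter (fun j => σ0 j = 1 ∧ S j = 0)).card : ℕ) : ℝ)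
      = (n:ℝ)/2 - (m:ℝ) - (k:ℝ) := by
    have h := sum6 (fun a _ => if a = (1:ℝ) then (1:ℝ) else 0)
    norm_num [Finset.sum_boole, hbal] at h
    linarith
  have u2r : (((Finset.univ.filter (fun j => σ0 j = -1 ∧ S j = 0)).card : ℕ) : ℝ)
      = (n:ℝ)/2 - (m:ℝ) - (k:ℝ) := by
    have h := sum6 (fun _ _ => (1:ℝ))
    norm_num at h
    linarith
  -- the two key sums
  have hT0 : (∑ j, meanFieldX n k m pin pout lam σ0 S j) = 0 := by
    calc (∑ j, meanFieldX n k m pin pout lam σ0 S j)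
        = ∑ j, (fun a b => if b = (0:ℝ) then g0 * a else if b = a then g2 * a else g1 * a)
            (σ0 j) (S j) := rfl
      _ = 0 := by
          rw [sum6 (fun a b => if b = (0:ℝ) then g0 * a else if b = a then g2 * a else g1 * a),
            u1r, u2r]
          norm_num
          ring
  have hT1 : (∑ j, σ0 j * meanFieldX n k m pin pout lam σ0 S j)
      = 2 * ((m:ℝ) * g2 + (k:ℝ) * g1 + ((n:ℝ)/2 - (m:ℝ) - (k:ℝ)) * g0) := by
    calc (∑ j, σ0 j * meanFieldX n k m pin pout lam σ0 S j)
        = ∑ j, (fun a b => a * (if b = (0:ℝ) then g0 * a else if b = a then g2 * a else g1 * a))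
            (σ0 j) (S j) := rfl
      _ = _ := by
          rw [sum6 (fun a b => a * (if b = (0:ℝ) then g0 * a else if b = a then g2 * a else g1 * a)),
            u1r, u2r]
          norm_num
          ring
  -- expand EA entries
  have hEA : ∀ i j, meanEA n pin pout σ0 i j
      = (pin + pout)/2 + (pin - pout)/2 * (σ0 i * σ0 j) := by
    intro i j
    rcases hσ i with h | h <;> rcases hσ j with h' | h' <;>
      simp only [meanEA, Matrix.of_apply, h, h'] <;> norm_num <;> ring
  funext i
  have hsum : (∑ j, (meanEA n pin pout σ0 i j - τ) * meanFieldX n k m pin pout lam σ0 S j)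
      = (pin - pout)/2 * σ0 i
          * (2 * ((m:ℝ) * g2 + (k:ℝ) * g1 + ((n:ℝ)/2 - (m:ℝ) - (k:ℝ)) * g0)) := by
    have step : ∀ j, (meanEA n pin pout σ0 i j - τ) * meanFieldX n k m pin pout lam σ0 S j
        = ((pin + pout)/2 - τ) * meanFieldX n k m pin pout lam σ0 S j
          + ((pin - pout)/2 * σ0 i) * (σ0 j * meanFieldX n k m pin pout lam σ0 S j) := by
      intro j; rw [hEA i j]; ring
    rw [Finset.sum_congr rfl (fun j _ => step j), Finset.sum_add_distrib,
      ← Finset.mul_sum, ← Finset.mul_sum, hT0, hT1]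
    ring
  have entry : (meanLtilde n pin pout τ lam σ0 S *ᵥ meanFieldX n k m pin pout lam σ0 S) i
      = ((n:ℝ) * (pin - pout) / 2) * meanFieldX n k m pin pout lam σ0 S i
        - (∑ j, (meanEA n pin pout σ0 i j - τ) * meanFieldX n k m pin pout lam σ0 S j)
        + lam * ((if S i = 0 then (0:ℝ) else 1) * meanFieldX n k m pin pout lam σ0 S i) := by
    simp only [meanLtilde, Matrix.add_mulVec, Matrix.sub_mulVec, Matrix.smul_mulVec,
      Matrix.one_mulVec, labelProj, Pi.add_apply, Pi.sub_apply, Pi.smul_apply, smul_eq_mul,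
      Matrix.mulVec_diagonal]
    rfl
  have hXi : meanFieldX n k m pin pout lam σ0 S i
      = if S i = 0 then g0 * σ0 i else if S i = σ0 i then g2 * σ0 i else g1 * σ0 i := rfl
  have hden1 : lam + (n:ℝ) * (pin - pout) / 2 ≠ 0 := by
    have h1 : (0:ℝ) < (n:ℝ) := by exact_mod_cast hn
    have h3 : (0:ℝ) < (n:ℝ) * (pin - pout) := mul_pos h1 (by linarith)
    have : (0:ℝ) < (n:ℝ) * (pin - pout) / 2 := by linarith
    linarith
  have hden2 : (k:ℝ) + (m:ℝ) ≠ 0 := by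
    have : (1:ℝ) ≤ (k:ℝ) + (m:ℝ) := by exact_mod_cast hkm1
    linarith
  rw [entry, hsum, hXi]
  simp only [Pi.smul_apply, smul_eq_mul]
  have hden1' : lam * 2 + (n:ℝ) * (pin - pout) ≠ 0 := fun hc => hden1 (by linarith)
  have hden3 : 2 * lam + (n:ℝ) * (pin - pout) ≠ 0 := fun hc => hden1 (by linarith)
  rcases hσ i with h | h <;> rcases hSval i with h' | h' | h' <;>
      (try rw [h] at h') <;> (try norm_num at h') <;>
      rw [h', h] <;> norm_num <;>
      rw [hg1, hg2, hg0] <;> clear_value g0 g1 g2 <;>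
      field_simp [hden1', hden2, hden3] <;> ring


end
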